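/- The isentropic (Hu–Shu) vortex is a stationary solution of the 2D compressible Euler equations: with r² = (x−5)² + (y−5)², δT = −(γ−1)(25/(8γπ²)) e^{1−r²}, ρ = (1+δT)^{1/(γ−1)}, p = (1+δT)^{γ/(γ−1)}, and u = (5/(2π)) e^{(1−r²)/2} (5−y, x−5), one has div(ρu) = 0 and ρ(u·∇)u + ∇p = 0 pointwise (wherever 1+δT > 0). -/

import Mathlib

open Real

noncomputable def pd2 (j : Fin 2) (f : (Fin 2 → ℝ) → ℝ) (x : Fin 2 → ℝ) : ℝ :=
  fderiv ℝ f x (Pi.single j 1)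

noncomputable def r2 (x : Fin 2 → ℝ) : ℝ := (x 0 - 5) ^ 2 + (x 1 - 5) ^ 2

noncomputable def δT (γ : ℝ) (x : Fin 2 → ℝ) : ℝ :=
  -((γ - 1) * (25 / (8 * γ * Real.pi ^ 2)) * Real.exp (1 - r2 x))

noncomputable def vρ (γ : ℝ) (x : Fin 2 → ℝ) : ℝ := (1 + δT γ x) ^ (1 / (γ - 1))

noncomputable def vp (γ : ℝ) (x : Fin 2 → ℝ) : ℝ := (1 + δT γ x) ^ (γ / (γ - 1))

noncomputable def vu (x : Fin 2 → ℝ) : Fin 2 → ℝ :=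
  ![(5 / (2 * Real.pi)) * Real.exp ((1 - r2 x) / 2) * (5 - x 1),
    (5 / (2 * Real.pi)) * Real.exp ((1 - r2 x) / 2) * (x 0 - 5)]


noncomputable def pr (j : Fin 2) : (Fin 2 → ℝ) →L[ℝ] ℝ := ContinuousLinearMap.proj j

def HasPD (f : (Fin 2 → ℝ) → ℝ) (c0 c1 : ℝ) (x : Fin 2 → ℝ) : Prop :=
  HasFDerivAt f (c0 • pr 0 + c1 • pr 1) x

variable {f g : (Fin 2 → ℝ) → ℝ} {c0 c1 d0 d1 : ℝ} {x : Fin 2 → ℝ}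

lemma HasPD.pd₀ (h : HasPD f c0 c1 x) : pd2 0 f x = c0 := by
  unfold pd2
  rw [HasFDerivAt.fderiv h]
  simp [pr, Pi.single_apply]

lemma HasPD.pd₁ (h : HasPD f c0 c1 x) : pd2 1 f x = c1 := by
  unfold pd2
  rw [HasFDerivAt.fderiv h]
  simp [pr, Pi.single_apply]

lemma hasPD_coord0 : HasPD (fun y => y 0) 1 0 x := by
  have := (pr 0).hasFDerivAt (x := x)
  unfold HasPD
  refine this.congr_fderiv ?_
  module

lemma hasPD_coord1 : HasPD (fun y => y 1) 0 1 x := by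
  have := (pr 1).hasFDerivAt (x := x)
  unfold HasPD
  refine this.congr_fderiv ?_
  module

lemma hasPD_const (c : ℝ) : HasPD (fun _ => c) 0 0 x := by
  have := hasFDerivAt_const (𝕜 := ℝ) c x
  unfold HasPD
  refine this.congr_fderiv ?_
  module

lemma HasPD.add (hf : HasPD f c0 c1 x) (hg : HasPD g d0 d1 x) :
    HasPD (fun y => f y + g y) (c0 + d0) (c1 + d1) x := by
  have := HasFDerivAt.add hf hg
  unfold HasPD
  refine this.congr_fderiv ?_
  module

lemma HasPD.sub (hf : HasPD f c0 c1 x) (hg : HasPD g d0 d1 x) :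
    HasPD (fun y => f y - g y) (c0 - d0) (c1 - d1) x := by
  have := HasFDerivAt.sub hf hg
  unfold HasPD
  refine this.congr_fderiv ?_
  module

lemma HasPD.neg (hf : HasPD f c0 c1 x) :
    HasPD (fun y => -f y) (-c0) (-c1) x := by
  have := HasFDerivAt.neg hf
  unfold HasPD
  refine this.congr_fderiv ?_
  module

lemma HasPD.mul (hf : HasPD f c0 c1 x) (hg : HasPD g d0 d1 x) :
    HasPD (fun y => f y * g y) (f x * d0 + g x * c0) (f x * d1 + g x * c1) x := by
  have := HasFDerivAt.mul hf hg
  unfold HasPD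
  refine this.congr_fderiv ?_
  module

lemma HasPD.const_mul (hf : HasPD f c0 c1 x) (c : ℝ) :
    HasPD (fun y => c * f y) (c * c0) (c * c1) x := by
  have := HasFDerivAt.const_mul hf c
  unfold HasPD
  refine this.congr_fderiv ?_
  module

lemma HasPD.scomp {φ : ℝ → ℝ} {d : ℝ} (hf : HasPD f c0 c1 x)
    (hφ : HasDerivAt φ d (f x)) :
    HasPD (fun y => φ (f y)) (d * c0) (d * c1) x := by
  have := hφ.comp_hasFDerivAt x hf
  unfold HasPD
  refine this.congr_fderiv ?_
  module

lemma HasPD.congr_coef (h : HasPD f c0 c1 x) (h0 : d0 = c0) (h1 : d1 = c1) :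
    HasPD f d0 d1 x := by rw [h0, h1]; exact h


/-- The isentropic (Hu–Shu) vortex is a stationary solution of the 2D compressible
Euler equations: `div(ρu) = 0` and `ρ(u·∇)u + ∇p = 0` wherever `1 + δT > 0`. -/
theorem stmt17 (γ : ℝ) (hγ : 1 < γ) :
    ∀ x : Fin 2 → ℝ, 0 < 1 + δT γ x →
      (pd2 0 (fun y => vρ γ y * vu y 0) x + pd2 1 (fun y => vρ γ y * vu y 1) x = 0)
      ∧ (∀ i, vρ γ x * (∑ j, vu x j * pd2 j (fun y => vu y i) x)
            + pd2 i (vp γ) x = 0) := by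
  intro x hs
  have hπ : (π : ℝ) ≠ 0 := Real.pi_ne_zero
  have hγ1 : γ - 1 ≠ 0 := sub_ne_zero.mpr (ne_of_gt hγ)
  have hγ0 : γ ≠ 0 := by linarith
  -- basic partial-derivative facts
  have hsub0 : HasPD (fun y => y 0 - (5:ℝ)) 1 0 x :=
    (hasPD_coord0.sub (hasPD_const 5)).congr_coef (by ring) (by ring)
  have hsub1 : HasPD (fun y => y 1 - (5:ℝ)) 0 1 x :=
    (hasPD_coord1.sub (hasPD_const 5)).congr_coef (by ring) (by ring)
  have h5y : HasPD (fun y => (5:ℝ) - y 1) 0 (-1) x :=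
    ((hasPD_const 5).sub hasPD_coord1).congr_coef (by ring) (by ring)
  have hr2 : HasPD r2 (2 * (x 0 - 5)) (2 * (x 1 - 5)) x := by
    have h := (hsub0.mul hsub0).add (hsub1.mul hsub1)
    have hfe : r2 = fun y => (y 0 - 5) * (y 0 - 5) + (y 1 - 5) * (y 1 - 5) := by
      funext y; simp [r2]; ring
    rw [hfe]
    exact h.congr_coef (by ring) (by ring)
  have h1r2 : HasPD (fun y => 1 - r2 y) (-(2 * (x 0 - 5))) (-(2 * (x 1 - 5))) x :=
    ((hasPD_const 1).sub hr2).congr_coef (by ring) (by ring)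
  -- exp((1 - r2 y)/2)
  have hφE : HasDerivAt (fun t : ℝ => Real.exp (t / 2))
      (Real.exp ((1 - r2 x) / 2) * (1 / 2)) (1 - r2 x) := by
    exact (Real.hasDerivAt_exp ((1 - r2 x) / 2)).comp (1 - r2 x)
      ((hasDerivAt_id (1 - r2 x)).div_const 2)
  have hEx : HasPD (fun y => Real.exp ((1 - r2 y) / 2)) _ _ x := h1r2.scomp hφE
  -- δT
  have hφδ : HasDerivAt (fun t : ℝ => -((γ - 1) * (25 / (8 * γ * Real.pi ^ 2)) * Real.exp t))
      (-((γ - 1) * (25 / (8 * γ * Real.pi ^ 2)) * Real.exp (1 - r2 x))) (1 - r2 x) :=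
    ((Real.hasDerivAt_exp (1 - r2 x)).const_mul ((γ - 1) * (25 / (8 * γ * Real.pi ^ 2)))).neg
  have hδ : HasPD (δT γ) _ _ x := h1r2.scomp hφδ
  have hbase : HasPD (fun y => 1 + δT γ y) _ _ x := (hasPD_const 1).add hδ
  -- ρ and p
  have hρ : HasPD (vρ γ) _ _ x :=
    hbase.scomp (Real.hasDerivAt_rpow_const (p := 1 / (γ - 1)) (Or.inl (ne_of_gt hs)))
  have hp : HasPD (vp γ) _ _ x :=
    hbase.scomp (Real.hasDerivAt_rpow_const (p := γ / (γ - 1)) (Or.inl (ne_of_gt hs)))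
  -- velocity components
  have hu0 : HasPD (fun y => 5 / (2 * π) * Real.exp ((1 - r2 y) / 2) * (5 - y 1)) _ _ x :=
    (hEx.const_mul (5 / (2 * π))).mul h5y
  have hu1 : HasPD (fun y => 5 / (2 * π) * Real.exp ((1 - r2 y) / 2) * (y 0 - 5)) _ _ x :=
    (hEx.const_mul (5 / (2 * π))).mul hsub0
  have hρu0 : HasPD (fun y => vρ γ y * (5 / (2 * π) * Real.exp ((1 - r2 y) / 2) * (5 - y 1))) _ _ x :=
    hρ.mul hu0
  have hρu1 : HasPD (fun y => vρ γ y * (5 / (2 * π) * Real.exp ((1 - r2 y) / 2) * (y 0 - 5))) _ _ x :=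
    hρ.mul hu1
  have hvu0 : ∀ y : Fin 2 → ℝ, vu y 0 = 5 / (2 * π) * Real.exp ((1 - r2 y) / 2) * (5 - y 1) :=
    fun y => by simp [vu]
  have hvu1 : ∀ y : Fin 2 → ℝ, vu y 1 = 5 / (2 * π) * Real.exp ((1 - r2 y) / 2) * (y 0 - 5) :=
    fun y => by simp [vu]
  have hEe : Real.exp (1 - r2 x) = Real.exp ((1 - r2 x) / 2) * Real.exp ((1 - r2 x) / 2) := by
    rw [← Real.exp_add]; ring_nf
  have hpow : (1 + δT γ x) ^ (γ / (γ - 1) - 1) = vρ γ x := by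
    rw [vρ]; congr 1; field_simp; ring
  constructor
  · simp only [hvu0, hvu1]
    rw [hρu0.pd₀, hρu1.pd₁]
    ring
  · intro i
    fin_cases i <;>
      simp only [Fin.zero_eta, Fin.mk_one, Fin.isValue, Fin.sum_univ_two, hvu0, hvu1]
    · rw [hu0.pd₀, hu0.pd₁, hp.pd₀]
      rw [hpow, hEe]
      field_simp
      ring
    · rw [hu1.pd₀, hu1.pd₁, hp.pd₁]
      rw [hpow, hEe]
      field_simp
      ring
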